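/- Let f₁, …, f_N : ℝⁿ → ℝ be continuously differentiable, let X ⊆ ℝⁿ be bounded, let δ ≥ 0, β ∈ (−1, 1), and γ ∈ ℝ. Then there exist δ' > 0 and ᾱ > 0 such that for all α ∈ (0, ᾱ], all k̄ ∈ ℕ, and every random-reshuffling-with-momentum trajectory (x_{k,i}) of f₁, …, f_N with step size α and parameters β, γ, δ whose outer iterates satisfy x₀, …, x_{k̄} ∈ X, one has ‖x_{k,i} − x_{k,i−1}‖ ≤ δ'α for all k ∈ {0, …, k̄} and i ∈ {0, …, N}. (This is the paper's Lemma 4.1 in the continuously differentiable case, where the Clarke subdifferentials ∂f_i are the singletons {∇f_i}.) -/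

import Mathlib

/-- A random-reshuffling-with-momentum trajectory of `f 0, …, f (N-1)` with step size `α`
and parameters `β, γ, δ`.  Here `x k j` represents the point `x_{k,j}` of the paper for
`j ∈ {-1, 0, …, N}`, with `x_{k,-1} = x_{k-1,N-1}` (and `x 0 (-1)` playing the role of the
extra initial point `x_{-1,N-1}`), `x_{k+1,0} = x_{k,N}`, `‖x_{-1,N-1} - x₀‖ ≤ δα`, and
for every `k` there is a permutation `σᵏ` such that for every `i ∈ {0, …, N-1}` (the
paper's index `i+1 ∈ {1, …, N}`):
`x_{k,i+1} = x_{k,i} + β (x_{k,i} - x_{k,i-1}) - α ∇f_{σᵏ(i)}(y_{k,i+1})` where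
`y_{k,i+1} = x_{k,i} + γ (x_{k,i} - x_{k,i-1})`. -/
def IsRRMTraj {n N : ℕ} (f : Fin N → EuclideanSpace ℝ (Fin n) → ℝ) (α β γ δ : ℝ)
    (x : ℕ → ℤ → EuclideanSpace ℝ (Fin n)) : Prop :=
  ‖x 0 (-1) - x 0 0‖ ≤ δ * α ∧
  (∀ k : ℕ, x (k + 1) (-1) = x k ((N : ℤ) - 1)) ∧
  (∀ k : ℕ, x (k + 1) 0 = x k (N : ℤ)) ∧
  (∀ k : ℕ, ∃ σ : Equiv.Perm (Fin N), ∀ i : Fin N,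
    x k (((i : ℕ) : ℤ) + 1)
      = x k ((i : ℕ) : ℤ) + β • (x k ((i : ℕ) : ℤ) - x k (((i : ℕ) : ℤ) - 1))
        - α • gradient (f (σ i))
            (x k ((i : ℕ) : ℤ) + γ • (x k ((i : ℕ) : ℤ) - x k (((i : ℕ) : ℤ) - 1))))


set_option maxHeartbeats 2000000 in
theorem stmt_8 {n N : ℕ} (f : Fin N → EuclideanSpace ℝ (Fin n) → ℝ)
    (hf : ∀ i, ContDiff ℝ 1 (f i))
    (X : Set (EuclideanSpace ℝ (Fin n))) (hX : Bornology.IsBounded X)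
    (β γ δ : ℝ) (hβ : β ∈ Set.Ioo (-1 : ℝ) 1) (hδ : 0 ≤ δ) :
    ∃ δ' ᾱ : ℝ, 0 < δ' ∧ 0 < ᾱ ∧
      ∀ α : ℝ, 0 < α → α ≤ ᾱ → ∀ kbar : ℕ,
        ∀ x : ℕ → ℤ → EuclideanSpace ℝ (Fin n), IsRRMTraj f α β γ δ x →
          (∀ k : ℕ, k ≤ kbar → x k 0 ∈ X) →
          ∀ k : ℕ, k ≤ kbar → ∀ i : ℤ, 0 ≤ i → i ≤ (N : ℤ) →
            ‖x k i - x k (i - 1)‖ ≤ δ' * α := by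
  obtain ⟨hβ1, hβ2⟩ := hβ
  have hb : |β| < 1 := abs_lt.mpr ⟨hβ1, hβ2⟩
  have hb0 : (0:ℝ) ≤ |β| := abs_nonneg β
  have h1b : (0:ℝ) < 1 - |β| := by linarith
  set K := Metric.cthickening 1 X with hKdef
  have hKc : IsCompact K :=
    Metric.isCompact_of_isClosed_isBounded Metric.isClosed_cthickening hX.cthickening
  have hgradcont : ∀ i, Continuous (gradient (f i)) := by
    intro i
    have hrw : gradient (f i)
        = fun z => (InnerProductSpace.toDual ℝ _).symm (fderiv ℝ (f i) z) := rfl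
    rw [hrw]
    exact (InnerProductSpace.toDual ℝ _).symm.continuous.comp
      ((hf i).continuous_fderiv one_ne_zero)
  have hbound : ∀ i : Fin N, ∃ C : ℝ, 0 ≤ C ∧ ∀ z ∈ K, ‖gradient (f i) z‖ ≤ C := by
    intro i
    obtain ⟨C, hC⟩ := hKc.exists_bound_of_continuousOn (hgradcont i).continuousOn
    exact ⟨max C 0, le_max_right _ _, fun z hz => (hC z hz).trans (le_max_left _ _)⟩
  choose C hC0 hCb using hbound
  set M : ℝ := ∑ i, C i with hM
  have hM0 : 0 ≤ M := Finset.sum_nonneg fun i _ => hC0 i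
  have hMi : ∀ i, C i ≤ M := fun i =>
    Finset.single_le_sum (fun j _ => hC0 j) (Finset.mem_univ i)
  set δ' : ℝ := δ + M / (1 - |β|) + 1 with hδ'def
  have hdivnn : 0 ≤ M / (1 - |β|) := div_nonneg hM0 h1b.le
  have hδ'pos : 0 < δ' := by rw [hδ'def]; linarith
  set ᾱ : ℝ := 1 / ((N + |γ|) * δ' + 1) with hᾱdef
  have hden : (0:ℝ) < (N + |γ|) * δ' + 1 := by positivity
  have hᾱpos : 0 < ᾱ := by positivity
  have hstepconst : |β| * δ' + M ≤ δ' := by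
    have hMd : M / (1 - |β|) * (1 - |β|) = M := div_mul_cancel₀ M h1b.ne'
    rw [hδ'def]
    nlinarith [hMd, mul_nonneg h1b.le hδ]
  refine ⟨δ', ᾱ, hδ'pos, hᾱpos, ?_⟩
  intro α hα hαᾱ kbar x hTraj hxX
  obtain ⟨h0, hshift, hnext, hrec⟩ := hTraj
  have hkey : (N + |γ|) * δ' * α ≤ 1 := by
    have h1 : (N + |γ|) * δ' * ᾱ ≤ 1 := by
      rw [hᾱdef, mul_one_div, div_le_one hden]; linarith
    have h2 : (N + |γ|) * δ' * α ≤ (N + |γ|) * δ' * ᾱ := by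
      apply mul_le_mul_of_nonneg_left hαᾱ
      positivity
    linarith
  -- inner induction along one epoch
  have inner : ∀ k : ℕ, k ≤ kbar → ‖x k 0 - x k (-1)‖ ≤ δ' * α →
      ∀ j : ℕ, j ≤ N →
        ‖x k (j:ℤ) - x k ((j:ℤ) - 1)‖ ≤ δ' * α ∧
          ‖x k (j:ℤ) - x k 0‖ ≤ (j:ℝ) * (δ' * α) := by
    intro k hk hbase j
    induction j with
    | zero =>
      intro _
      refine ⟨by simpa using hbase, by simp⟩
    | succ j ihj =>
      intro hjN
      have hjlt : j < N := hjN
      obtain ⟨hd, hp⟩ := ihj hjlt.le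
      obtain ⟨σ, hσ⟩ := hrec k
      have heq := hσ ⟨j, hjlt⟩
      simp only [Fin.val_mk] at heq
      set d := x k (j:ℤ) - x k ((j:ℤ) - 1) with hd'
      set y := x k (j:ℤ) + γ • d with hy
      set g := gradient (f (σ ⟨j, hjlt⟩)) y with hg
      have heq' : x k ((j:ℤ) + 1) = x k (j:ℤ) + β • d - α • g := heq
      have hyK : y ∈ K := by
        have hyd : dist y (x k 0) ≤ 1 := by
          have : y - x k 0 = (x k (j:ℤ) - x k 0) + γ • d := by rw [hy]; abel
          rw [dist_eq_norm, this]
          have h1 : ‖(x k (j:ℤ) - x k 0) + γ • d‖ ≤ ‖x k (j:ℤ) - x k 0‖ + ‖γ • d‖ :=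
            norm_add_le _ _
          have h2 : ‖γ • d‖ = |γ| * ‖d‖ := by rw [norm_smul, Real.norm_eq_abs]
          have h3 : |γ| * ‖d‖ ≤ |γ| * (δ' * α) :=
            mul_le_mul_of_nonneg_left hd (abs_nonneg γ)
          have h4 : (j:ℝ) * (δ' * α) + |γ| * (δ' * α) ≤ (N + |γ|) * δ' * α := by
            have hjN' : (j:ℝ) ≤ (N:ℝ) := by exact_mod_cast hjlt.le
            nlinarith [mul_nonneg hδ'pos.le hα.le]
          linarith
        exact Metric.mem_cthickening_of_dist_le y (x k 0) 1 X (hxX k hk) hyd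
      have hgM : ‖g‖ ≤ M := (hCb _ y hyK).trans (hMi _)
      have hdiff : x k ((j:ℤ) + 1) - x k (j:ℤ) = β • d - α • g := by rw [heq']; abel
      have hnew : ‖x k ((j:ℤ) + 1) - x k (j:ℤ)‖ ≤ δ' * α := by
        rw [hdiff]
        have h1 : ‖β • d - α • g‖ ≤ ‖β • d‖ + ‖α • g‖ := norm_sub_le _ _
        have h2 : ‖β • d‖ = |β| * ‖d‖ := by rw [norm_smul, Real.norm_eq_abs]
        have h3 : ‖α • g‖ = α * ‖g‖ := by
          rw [norm_smul, Real.norm_eq_abs, abs_of_pos hα]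
        have h4 : |β| * ‖d‖ ≤ |β| * (δ' * α) := mul_le_mul_of_nonneg_left hd hb0
        have h5 : α * ‖g‖ ≤ α * M := mul_le_mul_of_nonneg_left hgM hα.le
        have h6 : (|β| * δ' + M) * α ≤ δ' * α :=
          mul_le_mul_of_nonneg_right hstepconst hα.le
        linarith
      have hcast : ((j + 1 : ℕ) : ℤ) = (j:ℤ) + 1 := by push_cast; ring
      constructor
      · rw [hcast]
        have : ((j:ℤ) + 1) - 1 = (j:ℤ) := by ring
        rw [this]
        exact hnew
      · rw [hcast]
        have htel : x k ((j:ℤ) + 1) - x k 0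
            = (x k ((j:ℤ) + 1) - x k (j:ℤ)) + (x k (j:ℤ) - x k 0) := by abel
        rw [htel]
        have h1 : ‖(x k ((j:ℤ) + 1) - x k (j:ℤ)) + (x k (j:ℤ) - x k 0)‖
            ≤ ‖x k ((j:ℤ) + 1) - x k (j:ℤ)‖ + ‖x k (j:ℤ) - x k 0‖ := norm_add_le _ _
        have : ((j + 1 : ℕ) : ℝ) = (j:ℝ) + 1 := by push_cast; ring
        rw [this]
        linarith
  have main : ∀ k : ℕ, k ≤ kbar → ∀ j : ℕ, j ≤ N →
      ‖x k (j:ℤ) - x k ((j:ℤ) - 1)‖ ≤ δ' * α ∧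
        ‖x k (j:ℤ) - x k 0‖ ≤ (j:ℝ) * (δ' * α) := by
    intro k
    induction k with
    | zero =>
      intro hk
      apply inner 0 hk
      have h1 : ‖x 0 0 - x 0 (-1)‖ = ‖x 0 (-1) - x 0 0‖ := norm_sub_rev _ _
      have h2 : δ * α ≤ δ' * α := by
        apply mul_le_mul_of_nonneg_right _ hα.le
        rw [hδ'def]; linarith
      rw [h1]; linarith [h0]
    | succ k ih =>
      intro hk
      have hk' : k ≤ kbar := Nat.le_of_succ_le hk
      apply inner _ hk
      have hIH := (ih hk' N le_rfl).1
      rw [hnext k, hshift k]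
      exact hIH
  intro k hk i hi0 hiN
  lift i to ℕ using hi0 with j
  have hjN : j ≤ N := by exact_mod_cast hiN
  exact (main k hk j hjN).1
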